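/- Let R be a nonzero commutative ring and A a nontrivial commutative group containing an element of infinite order. Then the augmentation ideal of the group ring R[A] is not nilpotent. -/

import Mathlib

/-- The augmentation map of the group ring `R[A]`. -/
noncomputable def aug (R : Type*) [CommRing R] (A : Type*) [AddCommGroup A] :
    AddMonoidAlgebra R A →ₐ[R] R :=
  (AddMonoidAlgebra.lift R R A) 1

/-- The augmentation ideal of `R[A]`. -/
noncomputable def augIdeal (R : Type*) [CommRing R] (A : Type*) [AddCommGroup A] :
    Ideal (AddMonoidAlgebra R A) :=
  RingHom.ker (aug R A).toRingHom

/-- If `R` is a nonzero commutative ring and the commutative group `A` has an element of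
infinite order, then the augmentation ideal of `R[A]` is not nilpotent. -/
theorem augIdeal_not_nilpotent_of_infinite_order (R : Type*) [CommRing R] [Nontrivial R]
    (A : Type*) [AddCommGroup A] [Nontrivial A] (a : A) (ha : addOrderOf a = 0) :
    ∀ n : ℕ, 0 < n → augIdeal R A ^ n ≠ ⊥ := by
  intro n hn hbot
  set x : AddMonoidAlgebra R A := AddMonoidAlgebra.single a 1 - 1 with hx
  have hxmem : x ∈ augIdeal R A := by
    simp [augIdeal, RingHom.mem_ker, aug, hx, map_sub, AddMonoidAlgebra.lift_single]
  have hxn : x ^ n ∈ augIdeal R A ^ n := Ideal.pow_mem_pow hxmem n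
  rw [hbot] at hxn
  have hxn0 : x ^ n = 0 := hxn
  have hinj : ∀ k : ℕ, k • a = n • a → k = n := by
    intro k h
    have h2 : ((k:ℤ) - n) • a = 0 := by
      rw [sub_smul]; simp [natCast_zsmul, h]
    rw [← addOrderOf_dvd_iff_zsmul_eq_zero, ha] at h2
    simpa [sub_eq_zero] using h2
  have hone : (1 : AddMonoidAlgebra R A) = AddMonoidAlgebra.single 0 1 :=
    (AddMonoidAlgebra.one_def)
  have hcoef : (x ^ n).coeff (n • a) = 1 := by
    rw [hx, sub_pow, AddMonoidAlgebra.coeff_sum, Finsupp.finset_sum_apply]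
    have key : ∀ k ∈ Finset.range (n + 1),
        ((-1) ^ (k + n) * (AddMonoidAlgebra.single a (1:R)) ^ k * 1 ^ (n - k) *
          (n.choose k : AddMonoidAlgebra R A)).coeff (n • a) = if k = n then 1 else 0 := by
      intro k hk
      have hneg : ((-1 : AddMonoidAlgebra R A) ^ (k + n)) =
          AddMonoidAlgebra.single 0 ((-1:R) ^ (k + n)) := by
        rw [show (-1 : AddMonoidAlgebra R A) = AddMonoidAlgebra.single 0 (-1:R) by
          rw [hone]; simp [AddMonoidAlgebra.single_neg]]
        rw [AddMonoidAlgebra.single_pow]; simp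
      have hnat : ((n.choose k : AddMonoidAlgebra R A)) =
          AddMonoidAlgebra.single 0 ((n.choose k : R)) := by
        simp [AddMonoidAlgebra.natCast_def]
      have hall : ((-1) ^ (k + n) * (AddMonoidAlgebra.single a (1:R)) ^ k * 1 ^ (n - k) *
            (n.choose k : AddMonoidAlgebra R A)) =
          AddMonoidAlgebra.single (k • a) ((-1:R) ^ (k + n) * (n.choose k : R)) := by
        rw [one_pow, mul_one, AddMonoidAlgebra.single_pow, hneg, hnat,
          AddMonoidAlgebra.single_mul_single, AddMonoidAlgebra.single_mul_single]
        simp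
      rw [hall]
      by_cases hkn : k = n
      · subst hkn
        rw [if_pos rfl]
        simp [AddMonoidAlgebra.coeff_single, Finsupp.single_apply, ← two_mul, pow_mul]
      · have hne : k • a ≠ n • a := fun h => hkn (hinj k h)
        rw [if_neg hkn]
        simp [AddMonoidAlgebra.coeff_single, Finsupp.single_apply, hne]
    rw [Finset.sum_congr rfl key, Finset.sum_ite_eq' (Finset.range (n+1)) n (fun _ => (1:R))]
    simp
  rw [hxn0] at hcoef
  simp at hcoef
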